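/- Under the stated hypotheses, the period satisfies L ≥ 100, i.e. the closed curve γ₀ has length at least 100. -/

import Mathlib

open MeasureTheory Set

noncomputable section

abbrev E3 := EuclideanSpace ℝ (Fin 3)

lemma chain_bound (ε : ℝ) (T : ℝ → E3) (hε : 0 ≤ ε)
    (hclose : ∀ s t : ℝ, |s - t| ≤ 1 → ‖T s - T t‖ ≤ ε) :
    ∀ n : ℕ, ∀ s t : ℝ, |s - t| ≤ n → ‖T s - T t‖ ≤ n * ε := by
  intro n
  induction n with
  | zero =>
    intro s t h
    simp only [Nat.cast_zero, zero_mul]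
    have : s = t := by
      have := abs_nonneg (s - t)
      have h0 : |s - t| = 0 := le_antisymm (by simpa using h) this
      have := abs_eq_zero.mp h0
      linarith
    simp [this]
  | succ n ih =>
    intro s t h
    set u : ℝ := t + (s - t) * ((n : ℝ) / (n + 1)) with hu
    have hn1 : (0:ℝ) < (n:ℝ) + 1 := by positivity
    have hsu : s - u = (s - t) * (1 / ((n:ℝ) + 1)) := by
      rw [hu]; field_simp; ring
    have hut : u - t = (s - t) * ((n : ℝ) / ((n:ℝ) + 1)) := by
      rw [hu]; ring
    have hcast : ((n + 1 : ℕ) : ℝ) = (n : ℝ) + 1 := by push_cast; ring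
    rw [hcast] at h
    have h1 : |s - u| ≤ 1 := by
      rw [hsu, abs_mul, abs_of_nonneg (by positivity : (0:ℝ) ≤ 1 / ((n:ℝ)+1))]
      rw [mul_one_div, div_le_one hn1]
      exact h
    have h2 : |u - t| ≤ n := by
      rw [hut, abs_mul, abs_of_nonneg (by positivity : (0:ℝ) ≤ (n:ℝ) / ((n:ℝ)+1))]
      calc |s - t| * ((n:ℝ) / ((n:ℝ)+1)) ≤ ((n:ℝ)+1) * ((n:ℝ) / ((n:ℝ)+1)) := by
            apply mul_le_mul_of_nonneg_right h (by positivity)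
        _ = n := by field_simp
    calc ‖T s - T t‖ ≤ ‖T s - T u‖ + ‖T u - T t‖ := norm_sub_le_norm_sub_add_norm_sub _ _ _
      _ ≤ ε + (n : ℝ) * ε := add_le_add (hclose s u h1) (ih u t h2)
      _ = ((n + 1 : ℕ) : ℝ) * ε := by push_cast; ring

/-- **Corollary 2.2.** Under the stated hypotheses on the closed arc-length parametrized `C¹`
curve `γ₀` (period `L ≥ 1`, `0 < ε < 1/10000`, tangents varying by at most `ε` on subsegments of
length `≤ 1`), the length of the curve satisfies `L ≥ 100`. -/
theorem stmt_3 (ε L : ℝ) (γ₀ T : ℝ → E3)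
    (hε : 0 < ε) (hε' : ε < 1 / 10000)
    (hL : 1 ≤ L)
    (hper : Function.Periodic γ₀ L)
    (hderiv : ∀ s, HasDerivAt γ₀ (T s) s)
    (hunit : ∀ s, ‖T s‖ = 1)
    (hclose : ∀ s t : ℝ, |s - t| ≤ 1 → ‖T s - T t‖ ≤ ε) :
    100 ≤ L := by
  by_contra hcon
  push_neg at hcon
  -- T is measurable (it equals deriv γ₀)
  have hTd : T = deriv γ₀ := by
    funext s; exact ((hderiv s).deriv).symm
  have hTmeas : Measurable T := hTd ▸ measurable_deriv γ₀
  have hTint : IntervalIntegrable T volume 0 L := by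
    apply IntervalIntegrable.mono_fun (intervalIntegrable_const (c := (1:ℝ)))
      hTmeas.aestronglyMeasurable
    filter_upwards with s
    simp [hunit s]
  -- FTC
  have hFTC : ∫ s in (0:ℝ)..L, T s = γ₀ L - γ₀ 0 :=
    intervalIntegral.integral_eq_sub_of_hasDerivAt (fun s _ => hderiv s) hTint
  have hclosed : γ₀ L = γ₀ 0 := by
    have := hper 0; simpa using this
  have hzero : ∫ s in (0:ℝ)..L, T s = 0 := by rw [hFTC, hclosed, sub_self]
  -- inner product with T 0
  have hTinner : IntervalIntegrable (fun s => (inner ℝ (T 0) (T s) : ℝ)) volume 0 L := by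
    apply IntervalIntegrable.mono_fun (intervalIntegrable_const (c := (1:ℝ)))
      (((continuous_const.inner continuous_id).measurable.comp hTmeas).aestronglyMeasurable)
    filter_upwards with s
    have := abs_real_inner_le_norm (T 0) (T s)
    simp only [Real.norm_eq_abs]
    rw [hunit 0, hunit s] at this; simpa using this
  have hint_inner : ∫ s in (0:ℝ)..L, (inner ℝ (T 0) (T s) : ℝ)
      = inner ℝ (T 0) (∫ s in (0:ℝ)..L, T s) := by
    simpa using (innerSL ℝ (T 0)).intervalIntegral_comp_comm hTint
  -- pointwise lower bound on [0, L]
  have hlow : ∀ s ∈ Icc (0:ℝ) L, (1/2 : ℝ) ≤ (inner ℝ (T 0) (T s) : ℝ) := by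
    intro s hs
    have hsb : |s - 0| ≤ (100 : ℕ) := by
      rw [sub_zero, abs_of_nonneg hs.1]
      push_cast
      linarith [hs.2]
    have hTb : ‖T s - T 0‖ ≤ (100:ℕ) * ε :=
      chain_bound ε T hε.le hclose 100 s 0 hsb
    have hTb' : ‖T s - T 0‖ ≤ 1/100 := by
      push_cast at hTb
      linarith
    have hexp : (inner ℝ (T 0) (T s) : ℝ)
        = inner ℝ (T 0) (T 0) + inner ℝ (T 0) (T s - T 0) := by
      rw [inner_sub_right]; ring
    have h1 : (inner ℝ (T 0) (T 0) : ℝ) = 1 := by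
      rw [real_inner_self_eq_norm_sq, hunit 0]; norm_num
    have h2 : |(inner ℝ (T 0) (T s - T 0) : ℝ)| ≤ 1/100 := by
      calc |(inner ℝ (T 0) (T s - T 0) : ℝ)| ≤ ‖T 0‖ * ‖T s - T 0‖ := abs_real_inner_le_norm _ _
        _ ≤ 1 * (1/100) := by rw [hunit 0]; linarith
        _ = 1/100 := by norm_num
    have := abs_le.mp h2
    rw [hexp, h1]; linarith [this.1]
  -- integral lower bound
  have hmono : ∫ s in (0:ℝ)..L, (1/2 : ℝ) ≤ ∫ s in (0:ℝ)..L, (inner ℝ (T 0) (T s) : ℝ) := by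
    apply intervalIntegral.integral_mono_on (by linarith) (intervalIntegrable_const) hTinner
    exact hlow
  rw [intervalIntegral.integral_const, hint_inner, hzero, inner_zero_right] at hmono
  simp only [smul_eq_mul, sub_zero] at hmono
  nlinarith
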